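/- Let (p_n)_{n≥1} be the strictly increasing enumeration of all primes, and let M be the submonoid of (ℚ, +) generated by the set {1/(p_n p_{n+2}) : n ∈ ℕ, n ≥ 1}. Then M is atomic with set of atoms exactly {1/(p_n p_{n+2}) : n ≥ 1}, and M does not satisfy the ACCP: the sequence (1/p_n + 1/p_{n+1} + M)_{n≥1} is an ascending chain of principal ideals of M that does not stabilize. -/

import Mathlib

/-- A subset `S` of an abelian group is a submonoid if it contains `0`
and is closed under addition. -/
def IsSubmonoidSet {G : Type*} [AddCommGroup G] (S : Set G) : Prop :=
  (0 : G) ∈ S ∧ ∀ a ∈ S, ∀ b ∈ S, a + b ∈ S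

/-- `a` is an atom of the (sub)monoid `S`: it belongs to `S`, is not invertible in `S`,
and whenever `a = b + c` with `b, c ∈ S`, one of `b`, `c` is invertible in `S`. -/
def IsAtomIn {G : Type*} [AddCommGroup G] (S : Set G) (a : G) : Prop :=
  a ∈ S ∧ -a ∉ S ∧ ∀ b ∈ S, ∀ c ∈ S, a = b + c → (-b ∈ S ∨ -c ∈ S)

/-- `S` is atomic: every non-invertible element of `S` is a finite sum of atoms of `S`. -/
def IsAtomicSet {G : Type*} [AddCommGroup G] (S : Set G) : Prop :=
  ∀ a ∈ S, -a ∉ S → ∃ l : Multiset G, (∀ x ∈ l, IsAtomIn S x) ∧ l.sum = a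

/-- The principal ideal `b + S` of the (sub)monoid `S`. -/
def setIdeal {G : Type*} [AddCommGroup G] (S : Set G) (b : G) : Set G :=
  {x | ∃ m ∈ S, x = b + m}

/-- `S` satisfies the ACCP: every ascending chain of principal ideals of `S` stabilizes. -/
def SatisfiesACCPSet {G : Type*} [AddCommGroup G] (S : Set G) : Prop :=
  ∀ b : ℕ → G, (∀ n, b n ∈ S) →
    (∀ n, setIdeal S (b n) ⊆ setIdeal S (b (n + 1))) →
    ∃ N, ∀ n, N ≤ n → setIdeal S (b n) = setIdeal S (b N)

/-- The strictly increasing enumeration of all primes, `1`-indexed: for `n ≥ 1`,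
`nthPrime n = Nat.nth Nat.Prime (n - 1)` is the `n`-th prime. -/
noncomputable def nthPrime (n : ℕ) : ℕ := Nat.nth Nat.Prime (n - 1)

/-- The generating set `{1/(p_n p_{n+2}) : n ≥ 1}`. -/
noncomputable def genSet4 : Set ℚ :=
  {q | ∃ n : ℕ, 1 ≤ n ∧ q = 1 / ((nthPrime n : ℚ) * (nthPrime (n + 2) : ℚ))}

/-- The submonoid of `(ℚ, +)` generated by `{1/(p_n p_{n+2}) : n ≥ 1}`. -/
noncomputable def monoid4 : Set ℚ := ↑(AddSubmonoid.closure genSet4)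

/-! ### Auxiliary material -/

noncomputable def g4 (n : ℕ) : ℚ := 1 / ((nthPrime n : ℚ) * (nthPrime (n + 2) : ℚ))

lemma nthPrime_prime (n : ℕ) : (nthPrime n).Prime := Nat.prime_nth_prime _

lemma nthPrime_pos (n : ℕ) : 0 < nthPrime n := (nthPrime_prime n).pos

lemma nthPrime_two_le (n : ℕ) : 2 ≤ nthPrime n := (nthPrime_prime n).two_le

lemma nthPrime_cast_pos (n : ℕ) : (0 : ℚ) < (nthPrime n : ℚ) := by
  exact_mod_cast nthPrime_pos n

lemma nthPrime_cast_ne (n : ℕ) : ((nthPrime n : ℚ)) ≠ 0 := (nthPrime_cast_pos n).ne'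

lemma nthPrime_lt {i j : ℕ} (hi : 1 ≤ i) (hij : i < j) : nthPrime i < nthPrime j := by
  have h := Nat.nth_strictMono Nat.infinite_setOf_prime (show i - 1 < j - 1 by omega)
  simpa [nthPrime] using h

lemma nthPrime_inj {i j : ℕ} (hi : 1 ≤ i) (hj : 1 ≤ j) (h : nthPrime i = nthPrime j) :
    i = j := by
  rcases lt_trichotomy i j with hl | he | hl
  · exact absurd h (nthPrime_lt hi hl).ne
  · exact he
  · exact absurd h.symm (nthPrime_lt hj hl).ne

lemma nthPrime_one : nthPrime 1 = 2 := by
  have := Nat.nth_count (p := Nat.Prime) (n := 2) (by norm_num)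
  simpa [nthPrime, show Nat.count Nat.Prime 2 = 0 by decide] using this

lemma nthPrime_two : nthPrime 2 = 3 := by
  have := Nat.nth_count (p := Nat.Prime) (n := 3) (by norm_num)
  simpa [nthPrime, show Nat.count Nat.Prime 3 = 1 by decide] using this

lemma nthPrime_three : nthPrime 3 = 5 := by
  have := Nat.nth_count (p := Nat.Prime) (n := 5) (by norm_num)
  simpa [nthPrime, show Nat.count Nat.Prime 5 = 2 by decide] using this

lemma nthPrime_four : nthPrime 4 = 7 := by
  have := Nat.nth_count (p := Nat.Prime) (n := 7) (by norm_num)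
  simpa [nthPrime, show Nat.count Nat.Prime 7 = 3 by decide] using this

lemma g4_pos (n : ℕ) : 0 < g4 n := by
  have h1 := nthPrime_cast_pos n
  have h2 := nthPrime_cast_pos (n + 2)
  unfold g4; positivity

lemma g4_mem_genSet4 {n : ℕ} (hn : 1 ≤ n) : g4 n ∈ genSet4 := ⟨n, hn, rfl⟩

lemma mem_monoid4_nonneg {x : ℚ} (hx : x ∈ monoid4) : 0 ≤ x := by
  have h : x ∈ AddSubmonoid.closure genSet4 := hx
  clear hx
  induction h using AddSubmonoid.closure_induction with
  | mem y hy =>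
    obtain ⟨n, _, rfl⟩ := hy
    exact (g4_pos n).le
  | zero => exact le_refl 0
  | add a b _ _ ha hb => exact add_nonneg ha hb

lemma neg_not_mem_monoid4 {x : ℚ} (hx : 0 < x) : -x ∉ monoid4 := by
  intro h
  have := mem_monoid4_nonneg h
  linarith

lemma monoid4_unit_eq_zero {x : ℚ} (hx : x ∈ monoid4) (hx' : -x ∈ monoid4) : x = 0 := by
  have h1 := mem_monoid4_nonneg hx
  have h2 := mem_monoid4_nonneg hx'
  linarith

lemma g4_mem_monoid4 {n : ℕ} (hn : 1 ≤ n) : g4 n ∈ monoid4 :=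
  AddSubmonoid.subset_closure (g4_mem_genSet4 hn)

lemma zero_mem_monoid4 : (0 : ℚ) ∈ monoid4 := (AddSubmonoid.closure genSet4).zero_mem

lemma add_mem_monoid4 {x y : ℚ} (hx : x ∈ monoid4) (hy : y ∈ monoid4) : x + y ∈ monoid4 :=
  (AddSubmonoid.closure genSet4).add_mem hx hy

/-- Multiset decomposition of elements of `monoid4`. -/
lemma exists_multiset_of_mem_monoid4 {x : ℚ} (hx : x ∈ monoid4) :
    ∃ l : Multiset ℚ, (∀ y ∈ l, y ∈ genSet4) ∧ l.sum = x := by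
  have h : x ∈ AddSubmonoid.closure genSet4 := hx
  clear hx
  induction h using AddSubmonoid.closure_induction with
  | mem y hy => exact ⟨{y}, by simpa using hy, by simp⟩
  | zero => exact ⟨0, by simp, by simp⟩
  | add a b _ _ ha hb =>
    obtain ⟨l1, h1, hs1⟩ := ha
    obtain ⟨l2, h2, hs2⟩ := hb
    refine ⟨l1 + l2, ?_, by simp [hs1, hs2]⟩
    intro y hy
    rcases Multiset.mem_add.1 hy with h | h
    · exact h1 y h
    · exact h2 y h

/-- Finsupp representation of elements of `monoid4`. -/
lemma exists_finsupp_of_mem_monoid4 {x : ℚ} (hx : x ∈ monoid4) :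
    ∃ c : ℕ →₀ ℕ, c 0 = 0 ∧ c.sum (fun j k => (k : ℚ) * g4 j) = x := by
  have h : x ∈ AddSubmonoid.closure genSet4 := hx
  clear hx
  induction h using AddSubmonoid.closure_induction with
  | mem y hy =>
    obtain ⟨n, hn, rfl⟩ := hy
    refine ⟨Finsupp.single n 1, ?_, ?_⟩
    · rw [Finsupp.single_apply]
      simp [show ¬ n = 0 by omega]
    · rw [Finsupp.sum_single_index (by simp)]
      simp [g4]
  | zero => exact ⟨0, rfl, by simp⟩
  | add a b _ _ ha hb =>
    obtain ⟨c1, h1, hs1⟩ := ha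
    obtain ⟨c2, h2, hs2⟩ := hb
    refine ⟨c1 + c2, by simp [h1, h2], ?_⟩
    rw [Finsupp.sum_add_index' (by simp) (by intro a b₁ b₂; push_cast; ring)]
    rw [hs1, hs2]

/-- Key divisibility: in an integer relation among the generators supported on `[1, m]`,
the top coefficient is divisible by `nthPrime (m+2)`. -/
lemma g4_dvd_top (m : ℕ) (hm : 1 ≤ m) (z : ℕ → ℤ)
    (h : ∑ j ∈ Finset.Icc 1 m, (z j : ℚ) * g4 j = 0) :
    (nthPrime (m + 2) : ℤ) ∣ z m := by
  classical
  set N : ℕ := ∏ i ∈ Finset.Icc 1 (m + 2), nthPrime i with hN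
  set A : ℕ → ℕ := fun j => ∏ i ∈ ((Finset.Icc 1 (m + 2)).erase j).erase (j + 2), nthPrime i
    with hA
  have key : ∀ j ∈ Finset.Icc 1 m, ((N : ℚ)) * g4 j = (A j : ℚ) := by
    intro j hj
    rw [Finset.mem_Icc] at hj
    have hj1 : j ∈ Finset.Icc 1 (m + 2) := Finset.mem_Icc.2 ⟨hj.1, by omega⟩
    have hj2 : j + 2 ∈ (Finset.Icc 1 (m + 2)).erase j := by
      rw [Finset.mem_erase, Finset.mem_Icc]
      exact ⟨by omega, by omega, by omega⟩
    have e1 := Finset.mul_prod_erase (Finset.Icc 1 (m + 2)) nthPrime hj1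
    have e2 := Finset.mul_prod_erase ((Finset.Icc 1 (m + 2)).erase j) nthPrime hj2
    have hNe : N = nthPrime j * (nthPrime (j + 2) * A j) := by
      rw [hN, ← e1, ← e2]
    rw [hNe]
    have h1 := nthPrime_cast_ne j
    have h2 := nthPrime_cast_ne (j + 2)
    unfold g4
    push_cast
    field_simp
  have hZ : ∑ j ∈ Finset.Icc 1 m, z j * (A j : ℤ) = 0 := by
    have : ∑ j ∈ Finset.Icc 1 m, ((z j : ℚ) * (A j : ℚ)) = 0 := by
      calc ∑ j ∈ Finset.Icc 1 m, ((z j : ℚ) * (A j : ℚ))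
          = ∑ j ∈ Finset.Icc 1 m, (N : ℚ) * ((z j : ℚ) * g4 j) := by
            refine Finset.sum_congr rfl fun j hj => ?_
            rw [← key j hj]; ring
        _ = (N : ℚ) * ∑ j ∈ Finset.Icc 1 m, ((z j : ℚ) * g4 j) := by
            rw [Finset.mul_sum]
        _ = 0 := by rw [h, mul_zero]
    exact_mod_cast this
  set p : ℕ := nthPrime (m + 2) with hp
  obtain ⟨m', rfl⟩ : ∃ m', m = m' + 1 := ⟨m - 1, by omega⟩
  rw [Finset.sum_Icc_succ_top (by omega)] at hZ
  have hdvd : (p : ℤ) ∣ ∑ j ∈ Finset.Icc 1 m', z j * (A j : ℤ) := by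
    refine Finset.dvd_sum fun j hj => ?_
    rw [Finset.mem_Icc] at hj
    have hmem : m' + 1 + 2 ∈ ((Finset.Icc 1 (m' + 1 + 2)).erase j).erase (j + 2) := by
      rw [Finset.mem_erase, Finset.mem_erase, Finset.mem_Icc]
      refine ⟨by omega, by omega, by omega, by omega⟩
    have : p ∣ A j := Finset.dvd_prod_of_mem nthPrime hmem
    exact Dvd.dvd.mul_left (Int.natCast_dvd_natCast.2 this) _
  have htop : (p : ℤ) ∣ z (m' + 1) * (A (m' + 1) : ℤ) := by
    have : z (m' + 1) * (A (m' + 1) : ℤ) = -∑ j ∈ Finset.Icc 1 m', z j * (A j : ℤ) := by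
      linarith [hZ]
    rw [this]
    exact dvd_neg.2 hdvd
  have hpprime : Prime (p : ℤ) := Nat.prime_iff_prime_int.1 (nthPrime_prime _)
  rcases hpprime.dvd_mul.1 htop with h | h
  · exact h
  · exfalso
    have hpA : p ∣ A (m' + 1) := Int.natCast_dvd_natCast.1 h
    obtain ⟨i, hi, hdvd'⟩ := ((nthPrime_prime (m' + 3)).prime).exists_mem_finset_dvd hpA
    rw [Finset.mem_erase, Finset.mem_erase, Finset.mem_Icc] at hi
    have : p = nthPrime i :=
      (Nat.prime_dvd_prime_iff_eq (nthPrime_prime _) (nthPrime_prime i)).1 hdvd'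
    have : m' + 3 = i := nthPrime_inj (by omega) (by omega) this
    omega

lemma g4_smul_eq (j : ℕ) : (nthPrime j : ℚ) * g4 j = 1 / (nthPrime (j + 2) : ℚ) := by
  have h1 := nthPrime_cast_ne j
  have h2 := nthPrime_cast_ne (j + 2)
  unfold g4; field_simp

lemma g4_smul_eq' (j : ℕ) : (nthPrime (j + 2) : ℚ) * g4 j = 1 / (nthPrime j : ℚ) := by
  have h1 := nthPrime_cast_ne j
  have h2 := nthPrime_cast_ne (j + 2)
  unfold g4; field_simp

/-- The main independence lemma: an integer relation among the `g4 j`, `j ∈ [1, m]`,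
with all coefficients `≥ -1`, is trivial. -/
lemma g4_indep : ∀ (m : ℕ) (z : ℕ → ℤ), (∀ j, -1 ≤ z j) →
    (∑ j ∈ Finset.Icc 1 m, (z j : ℚ) * g4 j = 0) → ∀ j ∈ Finset.Icc 1 m, z j = 0 := by
  intro m
  induction m using Nat.strong_induction_on with
  | _ m ih =>
  rcases m with _ | _ | _ | k
  · intro z _ _ j hj
    simp at hj
  · -- m = 1
    intro z _ h j hj
    rw [Finset.mem_Icc] at hj
    have hj1 : j = 1 := by omega
    subst hj1
    rw [show Finset.Icc 1 1 = {1} from rfl, Finset.sum_singleton] at h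
    have := (g4_pos 1).ne'
    have : (z 1 : ℚ) = 0 := by
      rcases mul_eq_zero.1 h with h' | h'
      · exact h'
      · exact absurd h' this
    exact_mod_cast this
  · -- m = 2
    intro z hz h j hj
    have hIcc : Finset.Icc 1 2 = {1, 2} := rfl
    rw [hIcc, Finset.sum_insert (by decide), Finset.sum_singleton] at h
    have hg1 : g4 1 = 1 / 10 := by
      unfold g4; rw [nthPrime_one, nthPrime_three]; norm_num
    have hg2 : g4 2 = 1 / 21 := by
      unfold g4; rw [nthPrime_two, nthPrime_four]; norm_num
    rw [hg1, hg2] at h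
    have hz12 : 21 * z 1 + 10 * z 2 = 0 := by
      have : (21 * z 1 + 10 * z 2 : ℚ) = 210 * ((z 1 : ℚ) * (1 / 10) + (z 2 : ℚ) * (1 / 21)) := by
        push_cast; ring
      have h0 : (21 * z 1 + 10 * z 2 : ℚ) = 0 := by rw [this, h, mul_zero]
      exact_mod_cast h0
    have h1 := hz 1
    have h2 := hz 2
    rw [Finset.mem_Icc] at hj
    obtain ⟨hja, hjb⟩ := hj
    interval_cases j <;> omega
  · -- m = k + 3
    intro z hz h j hj
    have hdvd := g4_dvd_top (k + 3) (by omega) z h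
    obtain ⟨t, ht⟩ := hdvd
    have hP : (2 : ℤ) ≤ (nthPrime (k + 5) : ℤ) := by exact_mod_cast nthPrime_two_le (k + 5)
    have hzk3 := hz (k + 3)
    have ht0 : 0 ≤ t := by nlinarith
    have hP1 : (2 : ℤ) ≤ (nthPrime (k + 1) : ℤ) := by exact_mod_cast nthPrime_two_le (k + 1)
    set z' : ℕ → ℤ := Function.update z (k + 1) (z (k + 1) + (nthPrime (k + 1) : ℤ) * t)
      with hz'def
    have hz'ge : ∀ j, -1 ≤ z' j := by
      intro j
      rcases eq_or_ne j (k + 1) with rfl | hne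
      · rw [hz'def, Function.update_self]
        have hnn : (0 : ℤ) ≤ (nthPrime (k + 1) : ℤ) * t := by positivity
        have := hz (k + 1)
        linarith
      · rw [hz'def, Function.update_of_ne hne]
        exact hz j
    have hsum' : ∑ j ∈ Finset.Icc 1 (k + 2), (z' j : ℚ) * g4 j = 0 := by
      have hsplit : ∑ j ∈ Finset.Icc 1 (k + 3), (z j : ℚ) * g4 j
          = ∑ j ∈ Finset.Icc 1 (k + 2), (z j : ℚ) * g4 j + (z (k + 3) : ℚ) * g4 (k + 3) :=
        Finset.sum_Icc_succ_top (by omega) _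
      have hdiff : ∀ j ∈ Finset.Icc 1 (k + 2), (z' j : ℚ) * g4 j
          = (z j : ℚ) * g4 j
            + (if j = k + 1 then ((nthPrime (k + 1) : ℚ) * (t : ℚ)) * g4 j else 0) := by
        intro j hj
        rcases eq_or_ne j (k + 1) with rfl | hne
        · rw [hz'def, Function.update_self, if_pos rfl]
          push_cast; ring
        · rw [hz'def, Function.update_of_ne hne, if_neg hne, add_zero]
      rw [Finset.sum_congr rfl hdiff, Finset.sum_add_distrib, Finset.sum_ite_eq',
        if_pos (by rw [Finset.mem_Icc]; omega)]
      have e1 : ((nthPrime (k + 1) : ℚ) * (t : ℚ)) * g4 (k + 1)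
          = (t : ℚ) / (nthPrime (k + 3) : ℚ) := by
        have h' : ((nthPrime (k + 1) : ℚ) * (t : ℚ)) * g4 (k + 1)
            = (t : ℚ) * ((nthPrime (k + 1) : ℚ) * g4 (k + 1)) := by ring
        rw [h', g4_smul_eq (k + 1)]
        ring
      have e2 : (z (k + 3) : ℚ) * g4 (k + 3) = (t : ℚ) / (nthPrime (k + 3) : ℚ) := by
        have hcast : (z (k + 3) : ℚ) = (nthPrime (k + 5) : ℚ) * (t : ℚ) := by
          rw [ht]; push_cast; ring
        have h' : (z (k + 3) : ℚ) * g4 (k + 3)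
            = (t : ℚ) * ((nthPrime (k + 3 + 2) : ℚ) * g4 (k + 3)) := by
          rw [hcast]; ring
        rw [h', g4_smul_eq' (k + 3)]
        ring
      have hsum0 : ∑ j ∈ Finset.Icc 1 (k + 2), (z j : ℚ) * g4 j
          = -((z (k + 3) : ℚ) * g4 (k + 3)) := by
        rw [hsplit] at h; linarith
      rw [hsum0, e1, e2]
      ring
    have hres := ih (k + 2) (by omega) z' hz'ge hsum'
    have hzk1 : z' (k + 1) = 0 := hres (k + 1) (by rw [Finset.mem_Icc]; omega)
    rw [hz'def, Function.update_self] at hzk1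
    have hle : (nthPrime (k + 1) : ℤ) * t ≤ 1 := by
      have := hz (k + 1); linarith
    have ht1 : t ≤ 0 := by
      by_contra hc
      push_neg at hc
      have h2 : (nthPrime (k + 1) : ℤ) * 1 ≤ (nthPrime (k + 1) : ℤ) * t :=
        mul_le_mul_of_nonneg_left (by omega) (by positivity)
      linarith
    have ht0' : t = 0 := le_antisymm ht1 ht0
    have hzm : z (k + 3) = 0 := by rw [ht, ht0', mul_zero]
    rw [Finset.mem_Icc] at hj
    rcases eq_or_ne j (k + 3) with rfl | hne
    · exact hzm
    · have hj' : j ∈ Finset.Icc 1 (k + 2) := by rw [Finset.mem_Icc]; omega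
      have hz'j := hres j hj'
      rcases eq_or_ne j (k + 1) with rfl | hne'
      · rw [hz'def, Function.update_self] at hz'j
        rw [ht0', mul_zero, add_zero] at hz'j
        exact hz'j
      · rw [hz'def, Function.update_of_ne hne'] at hz'j
        exact hz'j

/-- Uniqueness of representation of a generator. -/
lemma g4_rep_unique {n : ℕ} (hn : 1 ≤ n) (c : ℕ →₀ ℕ) (hc0 : c 0 = 0)
    (hsum : c.sum (fun j k => (k : ℚ) * g4 j) = g4 n) :
    c = Finsupp.single n 1 := by
  classical
  set m : ℕ := max n (c.support.sup id) with hm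
  have hsupp : c.support ⊆ Finset.Icc 1 m := by
    intro j hj
    rw [Finset.mem_Icc]
    constructor
    · rcases Nat.eq_zero_or_pos j with rfl | h
      · exact absurd hc0 (Finsupp.mem_support_iff.1 hj)
      · exact h
    · exact le_trans (Finset.le_sup (f := id) hj) (le_max_right _ _)
  have hsum2 : ∑ j ∈ Finset.Icc 1 m, ((c j : ℚ)) * g4 j = g4 n := by
    rw [← hsum]
    exact (Finsupp.sum_of_support_subset c hsupp (fun j k => (k : ℚ) * g4 j)
      (by intro i _; simp)).symm
  set z : ℕ → ℤ := fun j => (c j : ℤ) - (if j = n then 1 else 0) with hzdef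
  have hzge : ∀ j, -1 ≤ z j := by
    intro j
    simp only [hzdef]
    split <;> omega
  have hzsum : ∑ j ∈ Finset.Icc 1 m, (z j : ℚ) * g4 j = 0 := by
    have expand : ∀ j ∈ Finset.Icc 1 m, (z j : ℚ) * g4 j
        = (c j : ℚ) * g4 j - (if j = n then g4 j else 0) := by
      intro j _
      rcases eq_or_ne j n with rfl | hne
      · simp only [hzdef, if_pos rfl]
        push_cast; ring
      · simp only [hzdef, if_neg hne]
        push_cast; ring
    rw [Finset.sum_congr rfl expand, Finset.sum_sub_distrib, hsum2, Finset.sum_ite_eq',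
      if_pos (by rw [Finset.mem_Icc]; omega)]
    ring
  have hz0 := g4_indep m z hzge hzsum
  ext j
  rcases Nat.eq_zero_or_pos j with rfl | hj1
  · rw [hc0, Finsupp.single_apply, if_neg (by omega)]
  rcases le_or_gt j m with hjm | hjm
  · have hthis : (c j : ℤ) - (if j = n then 1 else 0) = 0 :=
      hz0 j (by rw [Finset.mem_Icc]; omega)
    simp only [Finsupp.single_apply]
    rcases eq_or_ne j n with rfl | hne
    · rw [if_pos rfl] at hthis
      rw [if_pos rfl]
      omega
    · rw [if_neg hne] at hthis
      rw [if_neg (fun h => hne h.symm)]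
      omega
  · have hjn : j ≠ n := by omega
    have hjsupp : j ∉ c.support := fun hmem => by
      have := hsupp hmem
      rw [Finset.mem_Icc] at this
      omega
    rw [Finsupp.notMem_support_iff.1 hjsupp, Finsupp.single_apply, if_neg (fun h => hjn h.symm)]

/-- Every generator is an atom of `monoid4`. -/
lemma g4_isAtom {n : ℕ} (hn : 1 ≤ n) : IsAtomIn monoid4 (g4 n) := by
  refine ⟨g4_mem_monoid4 hn, neg_not_mem_monoid4 (g4_pos n), ?_⟩
  intro b hb c hc habc
  obtain ⟨cb, hb0, hbs⟩ := exists_finsupp_of_mem_monoid4 hb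
  obtain ⟨cc, hc0, hcs⟩ := exists_finsupp_of_mem_monoid4 hc
  have hadd : (cb + cc).sum (fun j k => (k : ℚ) * g4 j) = g4 n := by
    rw [Finsupp.sum_add_index' (by simp) (by intro a b₁ b₂; push_cast; ring), hbs, hcs]
    exact habc.symm
  have huniq := g4_rep_unique hn (cb + cc) (by simp [hb0, hc0]) hadd
  have hpt : ∀ j, cb j + cc j = (Finsupp.single n 1 : ℕ →₀ ℕ) j := by
    intro j; rw [← huniq]; rfl
  rcases Nat.eq_zero_or_pos (cb n) with hcbn | hcbn
  · left
    have : cb = 0 := by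
      ext j
      have := hpt j
      rw [Finsupp.single_apply] at this
      rcases eq_or_ne n j with rfl | hne
      · simp at this ⊢; omega
      · rw [if_neg hne] at this; simp; omega
    have : b = 0 := by rw [← hbs, this, Finsupp.sum_zero_index]
    rw [this, neg_zero]
    exact zero_mem_monoid4
  · right
    have : cc = 0 := by
      ext j
      have := hpt j
      rw [Finsupp.single_apply] at this
      rcases eq_or_ne n j with rfl | hne
      · simp at this ⊢; omega
      · rw [if_neg hne] at this; simp; omega
    have : c = 0 := by rw [← hcs, this, Finsupp.sum_zero_index]
    rw [this, neg_zero]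
    exact zero_mem_monoid4

lemma genSet4_mem_monoid4 {x : ℚ} (hx : x ∈ genSet4) : x ∈ monoid4 :=
  AddSubmonoid.subset_closure hx

lemma genSet4_eq_g4 {x : ℚ} (hx : x ∈ genSet4) : ∃ n, 1 ≤ n ∧ x = g4 n := hx

/-- `1 / p_n ∈ monoid4` for `n ≥ 1`. -/
lemma one_div_nthPrime_mem {n : ℕ} (hn : 1 ≤ n) : (1 : ℚ) / (nthPrime n : ℚ) ∈ monoid4 := by
  have h := g4_smul_eq' n
  have : (nthPrime (n + 2) : ℕ) • g4 n ∈ AddSubmonoid.closure genSet4 :=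
    AddSubmonoid.nsmul_mem _ (g4_mem_monoid4 hn) _
  rw [nsmul_eq_mul, h] at this
  exact this

lemma nat_smul_g4_mem {n : ℕ} (hn : 1 ≤ n) (k : ℕ) : (k : ℚ) * g4 n ∈ monoid4 := by
  have : (k : ℕ) • g4 n ∈ AddSubmonoid.closure genSet4 :=
    AddSubmonoid.nsmul_mem _ (g4_mem_monoid4 hn) _
  rwa [nsmul_eq_mul] at this

lemma setIdeal_mono {b b' : ℚ} (h : b - b' ∈ monoid4) :
    setIdeal monoid4 b ⊆ setIdeal monoid4 b' := by
  rintro x ⟨m, hm, rfl⟩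
  exact ⟨(b - b') + m, add_mem_monoid4 h hm, by ring⟩

lemma self_mem_setIdeal (b : ℚ) : b ∈ setIdeal monoid4 b :=
  ⟨0, zero_mem_monoid4, by ring⟩

theorem monoid4_atomic_not_ACCP :
    IsAtomicSet monoid4 ∧
    {a : ℚ | IsAtomIn monoid4 a} = genSet4 ∧
    (∀ n : ℕ, 1 ≤ n →
      ((1 : ℚ) / (nthPrime n : ℚ) + 1 / (nthPrime (n + 1) : ℚ)) ∈ monoid4 ∧
      setIdeal monoid4 ((1 : ℚ) / (nthPrime n : ℚ) + 1 / (nthPrime (n + 1) : ℚ)) ⊂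
        setIdeal monoid4 ((1 : ℚ) / (nthPrime (n + 1) : ℚ) + 1 / (nthPrime (n + 2) : ℚ))) ∧
    ¬ SatisfiesACCPSet monoid4 := by
  have hatomic : IsAtomicSet monoid4 := by
    intro a ha _
    obtain ⟨l, hl, hsum⟩ := exists_multiset_of_mem_monoid4 ha
    refine ⟨l, ?_, hsum⟩
    intro x hx
    obtain ⟨n, hn, rfl⟩ := genSet4_eq_g4 (hl x hx)
    exact g4_isAtom hn
  have hatoms : {a : ℚ | IsAtomIn monoid4 a} = genSet4 := by
    ext a
    constructor
    · rintro ⟨haM, hanot, hsplit⟩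
      have hane : a ≠ 0 := by
        rintro rfl
        rw [neg_zero] at hanot
        exact hanot zero_mem_monoid4
      obtain ⟨l, hl, hsum⟩ := exists_multiset_of_mem_monoid4 haM
      have hlne : l ≠ 0 := by
        rintro rfl
        simp at hsum
        exact hane hsum.symm
      obtain ⟨x, hx⟩ := Multiset.exists_mem_of_ne_zero hlne
      obtain ⟨l', rfl⟩ := Multiset.exists_cons_of_mem hx
      have hxM : x ∈ monoid4 := genSet4_mem_monoid4 (hl x hx)
      have hl'M : l'.sum ∈ monoid4 := by
        apply AddSubmonoid.multiset_sum_mem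
        intro y hy
        exact genSet4_mem_monoid4 (hl y (Multiset.mem_cons_of_mem hy))
      have hdecomp : a = x + l'.sum := by rw [← hsum, Multiset.sum_cons]
      rcases hsplit x hxM l'.sum hl'M hdecomp with hcase | hcase
      · exfalso
        obtain ⟨n, _, rfl⟩ := genSet4_eq_g4 (hl x hx)
        exact neg_not_mem_monoid4 (g4_pos n) hcase
      · have hls : l'.sum = 0 := monoid4_unit_eq_zero hl'M hcase
        have : a = x := by rw [hdecomp, hls, add_zero]
        rw [this]
        exact hl x hx
    · rintro ⟨n, hn, rfl⟩
      exact g4_isAtom (n := n) hn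
  have hchain : ∀ n : ℕ, 1 ≤ n →
      ((1 : ℚ) / (nthPrime n : ℚ) + 1 / (nthPrime (n + 1) : ℚ)) ∈ monoid4 ∧
      setIdeal monoid4 ((1 : ℚ) / (nthPrime n : ℚ) + 1 / (nthPrime (n + 1) : ℚ)) ⊂
        setIdeal monoid4 ((1 : ℚ) / (nthPrime (n + 1) : ℚ) + 1 / (nthPrime (n + 2) : ℚ)) := by
    intro n hn
    have hmem : ((1 : ℚ) / (nthPrime n : ℚ) + 1 / (nthPrime (n + 1) : ℚ)) ∈ monoid4 :=
      add_mem_monoid4 (one_div_nthPrime_mem hn) (one_div_nthPrime_mem (by omega))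
    have hPlt : (nthPrime n : ℚ) < (nthPrime (n + 2) : ℚ) := by
      exact_mod_cast nthPrime_lt hn (by omega)
    have hPn := nthPrime_cast_pos n
    have hPn2 := nthPrime_cast_pos (n + 2)
    have hdiffval : ((nthPrime (n + 2) - nthPrime n : ℕ) : ℚ) * g4 n
        = 1 / (nthPrime n : ℚ) - 1 / (nthPrime (n + 2) : ℚ) := by
      have hle : nthPrime n ≤ nthPrime (n + 2) := by exact_mod_cast hPlt.le
      rw [Nat.cast_sub hle]
      unfold g4
      field_simp
    have hdiffmem : ((1 : ℚ) / (nthPrime n : ℚ) + 1 / (nthPrime (n + 1) : ℚ))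
        - ((1 : ℚ) / (nthPrime (n + 1) : ℚ) + 1 / (nthPrime (n + 2) : ℚ)) ∈ monoid4 := by
      have : ((1 : ℚ) / (nthPrime n : ℚ) + 1 / (nthPrime (n + 1) : ℚ))
          - ((1 : ℚ) / (nthPrime (n + 1) : ℚ) + 1 / (nthPrime (n + 2) : ℚ))
          = ((nthPrime (n + 2) - nthPrime n : ℕ) : ℚ) * g4 n := by
        rw [hdiffval]; ring
      rw [this]
      exact nat_smul_g4_mem hn _
    have hsub := setIdeal_mono hdiffmem
    refine ⟨hmem, ?_⟩
    rw [Set.ssubset_iff_of_subset hsub]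
    refine ⟨(1 : ℚ) / (nthPrime (n + 1) : ℚ) + 1 / (nthPrime (n + 2) : ℚ),
      self_mem_setIdeal _, ?_⟩
    rintro ⟨m, hm, hmeq⟩
    have hm0 := mem_monoid4_nonneg hm
    have : m = 1 / (nthPrime (n + 2) : ℚ) - 1 / (nthPrime n : ℚ) := by linarith
    have hneg : m < 0 := by
      rw [this]
      have : 1 / (nthPrime (n + 2) : ℚ) < 1 / (nthPrime n : ℚ) :=
        one_div_lt_one_div_of_lt hPn hPlt
      linarith
    linarith
  refine ⟨hatomic, hatoms, hchain, ?_⟩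
  intro hACCP
  set b : ℕ → ℚ := fun k => (1 : ℚ) / (nthPrime (k + 1) : ℚ) + 1 / (nthPrime (k + 2) : ℚ)
    with hbdef
  have hbmem : ∀ k, b k ∈ monoid4 := fun k => (hchain (k + 1) (by omega)).1
  have hbchain : ∀ k, setIdeal monoid4 (b k) ⊆ setIdeal monoid4 (b (k + 1)) := by
    intro k
    have := (hchain (k + 1) (by omega)).2
    exact this.subset
  obtain ⟨N, hN⟩ := hACCP b hbmem hbchain
  have hstrict := (hchain (N + 1) (by omega)).2
  have heq := hN (N + 1) (by omega)
  rw [heq] at hstrict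
  exact hstrict.2 hstrict.1
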